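/- The derivative of the AF utility u(ρ) = (1/2)·log(1 + γ(ρ)) with respect to ρ has the same sign as κ(ρ) = C·ρ² - 2D·ρ + D, where C = (X+Y)(W+1) - Z and D = (X+Y+1)(W+1). -/

import Mathlib

theorem stmt_5 (X Y Z W : ℝ) (hX : 0 < X) (hY : 0 < Y) (hZ : 0 < Z) (hW : 0 < W)
    (C D : ℝ) (hC : C = (X + Y) * (W + 1) - Z) (hD : D = (X + Y + 1) * (W + 1))
    (γ u : ℝ → ℝ)
    (hγ : ∀ ρ, γ ρ = ρ * (1 - ρ) * X * Z /
      (ρ * (1 - ρ) * Y * Z + (1 - ρ) * (X + Y) * (W + 1) + ρ * Z + W + 1))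
    (hu : ∀ ρ, u ρ = (1 / 2) * Real.log (1 + γ ρ)) :
    ∀ ρ ∈ Set.Ioo (0 : ℝ) 1,
      Real.sign (deriv u ρ) = Real.sign (C * ρ ^ 2 - 2 * D * ρ + D) := by
  intro ρ hρ
  obtain ⟨hρ0, hρ1⟩ := hρ
  have hufun : u = fun t => (1 / 2) * Real.log (1 + (t * (1 - t) * X * Z) /
      (t * (1 - t) * Y * Z + (1 - t) * (X + Y) * (W + 1) + t * Z + W + 1)) := by
    funext t; rw [hu, hγ]
  set Qv : ℝ := ρ * (1 - ρ) * Y * Z + (1 - ρ) * (X + Y) * (W + 1) + ρ * Z + W + 1 with hQv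
  set Nv : ℝ := ρ * (1 - ρ) * X * Z with hNv
  have hQpos : 0 < Qv := by
    have h1 : 0 < 1 - ρ := by linarith
    have : 0 < ρ * (1 - ρ) * Y * Z := by positivity
    have : 0 < (1 - ρ) * (X + Y) * (W + 1) := by positivity
    have : 0 < ρ * Z := by positivity
    nlinarith
  have hNpos : 0 < Nv := by
    have h1 : 0 < 1 - ρ := by linarith
    positivity
  have hQne : Qv ≠ 0 := ne_of_gt hQpos
  -- derivative of numerator and denominator
  have hN : HasDerivAt (fun t : ℝ => t * (1 - t) * X * Z) ((1 - 2 * ρ) * X * Z) ρ := by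
    have := (((hasDerivAt_id ρ).mul ((hasDerivAt_const ρ (1:ℝ)).sub (hasDerivAt_id ρ))).mul_const X).mul_const Z
    refine this.congr_deriv ?_
    simp only [Pi.sub_apply, id_eq]; ring
  have hQ : HasDerivAt (fun t : ℝ => t * (1 - t) * Y * Z + (1 - t) * (X + Y) * (W + 1) + t * Z + W + 1)
      ((1 - 2 * ρ) * Y * Z - (X + Y) * (W + 1) + Z) ρ := by
    have h1 := (((hasDerivAt_id ρ).mul ((hasDerivAt_const ρ (1:ℝ)).sub (hasDerivAt_id ρ))).mul_const Y).mul_const Z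
    have h2 := ((((hasDerivAt_const ρ (1:ℝ)).sub (hasDerivAt_id ρ)).mul_const (X + Y)).mul_const (W + 1))
    have h3 := (hasDerivAt_id ρ).mul_const Z
    have := (((h1.add h2).add h3).add_const W).add_const 1
    refine this.congr_deriv ?_
    simp only [Pi.sub_apply, id_eq]; ring
  have hγ' : HasDerivAt (fun t : ℝ => (t * (1 - t) * X * Z) /
      (t * (1 - t) * Y * Z + (1 - t) * (X + Y) * (W + 1) + t * Z + W + 1))
      (((1 - 2 * ρ) * X * Z * Qv - Nv * ((1 - 2 * ρ) * Y * Z - (X + Y) * (W + 1) + Z)) / Qv ^ 2) ρ :=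
    hN.div hQ hQne
  have h1γpos : 0 < 1 + Nv / Qv := by positivity
  have hlog := ((hγ'.const_add 1).log (ne_of_gt h1γpos)).const_mul (1/2 : ℝ)
  have hderiv : deriv u ρ = (1/2) * ((((1 - 2 * ρ) * X * Z * Qv - Nv * ((1 - 2 * ρ) * Y * Z - (X + Y) * (W + 1) + Z)) / Qv ^ 2) / (1 + Nv / Qv)) := by
    rw [hufun]
    exact hlog.deriv
  have hkey : deriv u ρ = X * Z * (C * ρ ^ 2 - 2 * D * ρ + D) / (2 * Qv * (Qv + Nv)) := by
    have hs : Qv + Nv ≠ 0 := by positivity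
    rw [hderiv, hC, hD]
    simp only [hQv, hNv] at hQne hs ⊢
    field_simp
    ring
  have hQN : 0 < 2 * Qv * (Qv + Nv) := by positivity
  rw [hkey]
  rcases lt_trichotomy (C * ρ ^ 2 - 2 * D * ρ + D) 0 with h | h | h
  · have : X * Z * (C * ρ ^ 2 - 2 * D * ρ + D) / (2 * Qv * (Qv + Nv)) < 0 := by
      exact div_neg_of_neg_of_pos (mul_neg_of_pos_of_neg (mul_pos hX hZ) h) hQN
    rw [Real.sign_of_neg this, Real.sign_of_neg h]
  · rw [h]
    simp [Real.sign_zero]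
  · have : 0 < X * Z * (C * ρ ^ 2 - 2 * D * ρ + D) / (2 * Qv * (Qv + Nv)) := by positivity
    rw [Real.sign_of_pos this, Real.sign_of_pos h]
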